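/- Let n ≥ 3, let 1 ≤ i < j ≤ n, and let θ ∈ ℝ with sin θ ≠ 0. Then the fixed space {C ∈ (so(n))ⁿ : ρ(g^θ_{i,j})C = C} is exactly the linear span of the following tuples: (e_k ⊗ e^A_{l,m}) for all k and all l < m with {k,l,m} ∩ {i,j} = ∅; (e_i ⊗ e^A_{i,k} + e_j ⊗ e^A_{j,k}) for all k ∉ {i,j}; (e_i ⊗ e^A_{j,k} − e_j ⊗ e^A_{i,k}) for all k ∉ {i,j}; and (e_k ⊗ e^A_{i,j}) for all k ∉ {i,j}. -/

import Mathlib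

set_option maxRecDepth 10000
set_option maxHeartbeats 1000000
open Matrix BigOperators
noncomputable section

/-- `e^A_{i,j} = e_i e_jᵀ − e_j e_iᵀ`. -/
def eA {n : ℕ} (i j : Fin n) : Matrix (Fin n) (Fin n) ℝ :=
  Matrix.single i j 1 - Matrix.single j i 1

/-- The action `(ρ(g)C)_μ := Σ_ν (g⁻¹)_{ν,μ} • g C_ν g⁻¹` on `n`-tuples of matrices. -/
def rho {n : ℕ} (g : Matrix (Fin n) (Fin n) ℝ)
    (C : Fin n → Matrix (Fin n) (Fin n) ℝ) : Fin n → Matrix (Fin n) (Fin n) ℝ :=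
  fun μ => ∑ ν, (g⁻¹ ν μ) • (g * C ν * g⁻¹)

/-- The plane rotation `g^θ_{i,j}`. -/
def rot {n : ℕ} (i j : Fin n) (θ : ℝ) : Matrix (Fin n) (Fin n) ℝ :=
  Matrix.of fun a b =>
    if a = i ∧ b = i then Real.cos θ
    else if a = j ∧ b = j then Real.cos θ
    else if a = i ∧ b = j then -Real.sin θ
    else if a = j ∧ b = i then Real.sin θ
    else if a = b then 1 else 0

namespace Dev
variable {n : ℕ}

def Rv (c s : ℝ) (i j : Fin n) (f : Fin n → ℝ) (a : Fin n) : ℝ :=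
  if a = i then c * f i - s * f j else if a = j then s * f i + c * f j else f a

lemma rot_row {i j : Fin n} (θ : ℝ) (hij : i ≠ j) (a b : Fin n) :
    rot i j θ a b =
      if a = i then (if b = i then Real.cos θ else if b = j then -Real.sin θ else 0)
      else if a = j then (if b = i then Real.sin θ else if b = j then Real.cos θ else 0)
      else if a = b then 1 else 0 := by
  unfold rot
  simp only [of_apply]
  split_ifs <;> simp_all

lemma sumrot {i j : Fin n} (θ : ℝ) (hij : i ≠ j) (f : Fin n → ℝ) (a : Fin n) :
    ∑ k, rot i j θ a k * f k = Rv (Real.cos θ) (Real.sin θ) i j f a := by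
  rw [Finset.sum_congr rfl (fun k _ => show rot i j θ a k * f k =
      ((if a = i then (if k = i then Real.cos θ * f k else 0) + (if k = j then -Real.sin θ * f k else 0)
      else if a = j then (if k = i then Real.sin θ * f k else 0) + (if k = j then Real.cos θ * f k else 0)
      else if k = a then f k else 0)) from by
    rw [rot_row θ hij]; split_ifs <;> first | (subst_vars; simp_all) | ring1)]
  unfold Rv
  split_ifs <;> first | (simp [Finset.sum_add_distrib, Finset.sum_ite_eq', hij]; try ring1) | rfl

lemma sumrot' {i j : Fin n} (θ : ℝ) (hij : i ≠ j) (f : Fin n → ℝ) (a : Fin n) :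
    ∑ k, f k * rot i j θ a k = Rv (Real.cos θ) (Real.sin θ) i j f a := by
  rw [← sumrot θ hij f a]
  exact Finset.sum_congr rfl fun k _ => mul_comm _ _


lemma rot_neg_apply {i j : Fin n} (θ : ℝ) (hij : i ≠ j) (a b : Fin n) :
    rot i j (-θ) a b = rot i j θ b a := by
  rw [rot_row (-θ) hij, rot_row θ hij]
  split_ifs <;> first | (subst_vars; simp_all [Real.cos_neg, Real.sin_neg]) | ring1

lemma rot_mul {i j : Fin n} (hij : i ≠ j) (θ φ : ℝ) :
    rot i j θ * rot i j φ = rot i j (θ + φ) := by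
  ext a b
  rw [mul_apply, sumrot θ hij]
  unfold Rv
  beta_reduce
  by_cases hai : a = i <;> by_cases haj : a = j <;> by_cases hbi : b = i <;> by_cases hbj : b = j <;>
    simp_all [rot_row _ hij, hij.symm, Real.cos_add, Real.sin_add] <;>
    first | rfl | ring1 | (split_ifs <;> first | rfl | ring1 | simp_all)

lemma rot_zero {i j : Fin n} (hij : i ≠ j) : rot i j 0 = (1 : Matrix (Fin n) (Fin n) ℝ) := by
  ext a b
  rw [rot_row 0 hij, Matrix.one_apply]
  split_ifs <;> simp_all

lemma rot_inv {i j : Fin n} (θ : ℝ) (hij : i ≠ j) : (rot i j θ)⁻¹ = rot i j (-θ) := by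
  apply Matrix.inv_eq_right_inv
  rw [rot_mul hij, add_neg_cancel, rot_zero hij]

lemma rho_entry {i j : Fin n} (θ : ℝ) (hij : i ≠ j) (C : Fin n → Matrix (Fin n) (Fin n) ℝ)
    (μ a b : Fin n) :
    rho (rot i j θ) C μ a b =
      Rv (Real.cos θ) (Real.sin θ) i j
        (fun ν => Rv (Real.cos θ) (Real.sin θ) i j
          (fun y => Rv (Real.cos θ) (Real.sin θ) i j (fun x => C ν x y) a) b) μ := by
  unfold rho
  rw [rot_inv θ hij]
  simp only [Matrix.sum_apply, Matrix.smul_apply, Matrix.mul_apply, smul_eq_mul]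
  simp only [rot_neg_apply θ hij]
  simp only [sumrot θ hij, sumrot' θ hij]


lemma Rv_i {i j : Fin n} (c s : ℝ) (f : Fin n → ℝ) : Rv c s i j f i = c * f i - s * f j := by
  simp [Rv]

lemma Rv_j {i j : Fin n} (hij : i ≠ j) (c s : ℝ) (f : Fin n → ℝ) :
    Rv c s i j f j = s * f i + c * f j := by
  simp [Rv, hij.symm]

lemma Rv_ne {i j a : Fin n} (c s : ℝ) (f : Fin n → ℝ) (hai : a ≠ i) (haj : a ≠ j) :
    Rv c s i j f a = f a := by
  simp [Rv, hai, haj]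

lemma fix2 {c s x y : ℝ} (hcs : s^2 + c^2 = 1) (hc : c ≠ 1)
    (h1 : c*x - s*y = x) (h2 : s*x + c*y = y) : x = 0 ∧ y = 0 := by
  have hne : (2 - 2*c) ≠ 0 := fun h => hc (by linarith)
  have h3 : (2 - 2*c) * x = 0 := by linear_combination (c-1)*h1 + s*h2 - x*hcs
  have h4 : (2 - 2*c) * y = 0 := by linear_combination (-s)*h1 + (c-1)*h2 - y*hcs
  exact ⟨(mul_eq_zero.mp h3).resolve_left hne, (mul_eq_zero.mp h4).resolve_left hne⟩


lemma eA_apply (l m x y : Fin n) :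
    eA l m x y = (if l = x ∧ m = y then 1 else 0) - (if m = x ∧ l = y then 1 else 0) := rfl

lemma Rv_of_zero {i j a : Fin n} (c s : ℝ) (f : Fin n → ℝ) (h1 : f i = 0) (h2 : f j = 0) :
    Rv c s i j f a = f a := by
  unfold Rv; split_ifs with h h' <;> simp_all

-- conjugation of eA i j by the rotation (in 2 slots)
lemma conj_eA_ij {i j : Fin n} (hne : i ≠ j) {c s : ℝ} (hcs : s^2 + c^2 = 1) (a b : Fin n) :
    Rv c s i j (fun y => Rv c s i j (fun x => eA i j x y) a) b = eA i j a b := by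
  by_cases hai : a = i <;> by_cases haj : a = j <;> by_cases hbi : b = i <;> by_cases hbj : b = j <;>
    simp_all [Rv, eA_apply] <;>
    first | rfl | ring1 | linear_combination hcs | linear_combination -hcs |
      (split_ifs <;> first | simp_all | rfl | ring1 | linear_combination hcs | linear_combination -hcs) |
      (intros; exfalso; simp_all)

lemma conj_eA_ik {i j k : Fin n} (hne : i ≠ j) (hki : k ≠ i) (hkj : k ≠ j)
    {c s : ℝ} (hcs : s^2 + c^2 = 1) (a b : Fin n) :
    Rv c s i j (fun y => Rv c s i j (fun x => eA i k x y) a) b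
      = c * eA i k a b + s * eA j k a b := by
  by_cases hai : a = i <;> by_cases haj : a = j <;> by_cases hbi : b = i <;> by_cases hbj : b = j <;>
    simp_all [Rv, eA_apply] <;>
    first | rfl | ring1 | linear_combination hcs | linear_combination -hcs |
      (split_ifs <;> first | simp_all | rfl | ring1 | linear_combination hcs | linear_combination -hcs) |
      (intros; exfalso; simp_all)

lemma conj_eA_jk {i j k : Fin n} (hne : i ≠ j) (hki : k ≠ i) (hkj : k ≠ j)
    {c s : ℝ} (hcs : s^2 + c^2 = 1) (a b : Fin n) :
    Rv c s i j (fun y => Rv c s i j (fun x => eA j k x y) a) b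
      = -s * eA i k a b + c * eA j k a b := by
  by_cases hai : a = i <;> by_cases haj : a = j <;> by_cases hbi : b = i <;> by_cases hbj : b = j <;>
    simp_all [Rv, eA_apply] <;>
    first | rfl | ring1 | linear_combination hcs | linear_combination -hcs |
      (split_ifs <;> first | simp_all | rfl | ring1 | linear_combination hcs | linear_combination -hcs) |
      (intros; exfalso; simp_all)


lemma Rv_neg {i j a : Fin n} (c s : ℝ) (f : Fin n → ℝ) :
    Rv c s i j (fun x => -(f x)) a = -(Rv c s i j f a) := by
  unfold Rv; split_ifs <;> ring1

lemma rho_G1 {i j : Fin n} (θ : ℝ) (hne : i ≠ j) (k l m : Fin n)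
    (hki : k ≠ i) (hkj : k ≠ j) (hli : l ≠ i) (hlj : l ≠ j) (hmi : m ≠ i) (hmj : m ≠ j) :
    rho (rot i j θ) (Pi.single k (eA l m)) = Pi.single k (eA l m) := by
  have hz : ∀ (x y : Fin n), (x = i ∨ x = j ∨ y = i ∨ y = j) → eA l m x y = 0 := by
    intro x y h
    rw [eA_apply]
    rcases h with rfl | rfl | rfl | rfl <;> simp [hli, hlj, hmi, hmj]
  funext μ; ext a b
  rw [rho_entry θ hne]
  have h1 : ∀ ν y, Rv (Real.cos θ) (Real.sin θ) i j
      (fun x => (Pi.single k (eA l m) : Fin n → Matrix (Fin n) (Fin n) ℝ) ν x y) a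
      = (Pi.single k (eA l m) : Fin n → Matrix (Fin n) (Fin n) ℝ) ν a y := by
    intro ν y
    refine Rv_of_zero _ _ _ ?_ ?_
    · simp only [Pi.single_apply]; split_ifs <;> simp [hz i y (Or.inl rfl)]
    · simp only [Pi.single_apply]; split_ifs <;> simp [hz j y (Or.inr (Or.inl rfl))]
  simp only [h1]
  have h2 : ∀ ν, Rv (Real.cos θ) (Real.sin θ) i j
      (fun y => (Pi.single k (eA l m) : Fin n → Matrix (Fin n) (Fin n) ℝ) ν a y) b
      = (Pi.single k (eA l m) : Fin n → Matrix (Fin n) (Fin n) ℝ) ν a b := by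
    intro ν
    refine Rv_of_zero _ _ _ ?_ ?_
    · simp only [Pi.single_apply]; split_ifs <;> simp [hz a i (Or.inr (Or.inr (Or.inl rfl)))]
    · simp only [Pi.single_apply]; split_ifs <;> simp [hz a j (Or.inr (Or.inr (Or.inr rfl)))]
  simp only [h2]
  refine Rv_of_zero _ _ _ ?_ ?_
  · simp [Pi.single_eq_of_ne (Ne.symm hki)]
  · simp [Pi.single_eq_of_ne (Ne.symm hkj)]

lemma rho_G4 {i j k : Fin n} (θ : ℝ) (hne : i ≠ j) (hki : k ≠ i) (hkj : k ≠ j) :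
    rho (rot i j θ) (Pi.single k (eA i j)) = Pi.single k (eA i j) := by
  have hcs : Real.sin θ ^ 2 + Real.cos θ ^ 2 = 1 := Real.sin_sq_add_cos_sq θ
  funext μ; ext a b
  rw [rho_entry θ hne]
  have key : ∀ ν, Rv (Real.cos θ) (Real.sin θ) i j
      (fun y => Rv (Real.cos θ) (Real.sin θ) i j
        (fun x => (Pi.single k (eA i j) : Fin n → Matrix (Fin n) (Fin n) ℝ) ν x y) a) b
      = (Pi.single k (eA i j) : Fin n → Matrix (Fin n) (Fin n) ℝ) ν a b := by
    intro ν
    rcases eq_or_ne ν k with rfl | hν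
    · simp only [Pi.single_eq_same]
      exact conj_eA_ij hne hcs a b
    · simp only [Pi.single_eq_of_ne hν]
      simp [Rv]
  simp only [key]
  refine Rv_of_zero _ _ _ ?_ ?_
  · simp [Pi.single_eq_of_ne (Ne.symm hki)]
  · simp [Pi.single_eq_of_ne (Ne.symm hkj)]

lemma rho_G2 {i j k : Fin n} (θ : ℝ) (hne : i ≠ j) (hki : k ≠ i) (hkj : k ≠ j) :
    rho (rot i j θ) (Pi.single i (eA i k) + Pi.single j (eA j k))
      = Pi.single i (eA i k) + Pi.single j (eA j k) := by
  have hcs : Real.sin θ ^ 2 + Real.cos θ ^ 2 = 1 := Real.sin_sq_add_cos_sq θ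
  set G : Fin n → Matrix (Fin n) (Fin n) ℝ := Pi.single i (eA i k) + Pi.single j (eA j k) with hG
  have hCi : G i = eA i k := by simp [hG, Pi.single_apply, hne]
  have hCj : G j = eA j k := by simp [hG, Pi.single_apply, hne.symm]
  have hCo : ∀ ν, ν ≠ i → ν ≠ j → G ν = 0 := by
    intro ν h1 h2; simp [hG, Pi.single_apply, h1, h2]
  funext μ; ext a b
  rw [rho_entry θ hne]
  have key : ∀ ν, Rv (Real.cos θ) (Real.sin θ) i j
      (fun y => Rv (Real.cos θ) (Real.sin θ) i j (fun x => G ν x y) a) b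
      = (if ν = i then Real.cos θ * eA i k a b + Real.sin θ * eA j k a b
         else if ν = j then -Real.sin θ * eA i k a b + Real.cos θ * eA j k a b else 0) := by
    intro ν
    rcases eq_or_ne ν i with rfl | h1
    · simp only [hCi, if_pos rfl]
      exact conj_eA_ik hne hki hkj hcs a b
    rcases eq_or_ne ν j with rfl | h2
    · simp only [hCj, if_neg h1, if_pos rfl]
      exact conj_eA_jk hne hki hkj hcs a b
    · simp only [hCo ν h1 h2, if_neg h1, if_neg h2]
      simp [Rv]
  simp only [key]
  by_cases h1 : μ = i <;> by_cases h2 : μ = j <;>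
    simp_all [Rv, Pi.single_apply, hne, Ne.symm hne] <;>
    first
    | ring1
    | linear_combination (eA i k a b) * Real.sin_sq_add_cos_sq θ
    | linear_combination (eA j k a b) * Real.sin_sq_add_cos_sq θ
    | linear_combination (-(eA i k a b)) * Real.sin_sq_add_cos_sq θ
    | linear_combination (-(eA j k a b)) * Real.sin_sq_add_cos_sq θ

lemma rho_G3 {i j k : Fin n} (θ : ℝ) (hne : i ≠ j) (hki : k ≠ i) (hkj : k ≠ j) :
    rho (rot i j θ) (Pi.single i (eA j k) - Pi.single j (eA i k))
      = Pi.single i (eA j k) - Pi.single j (eA i k) := by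
  have hcs : Real.sin θ ^ 2 + Real.cos θ ^ 2 = 1 := Real.sin_sq_add_cos_sq θ
  set G : Fin n → Matrix (Fin n) (Fin n) ℝ := Pi.single i (eA j k) - Pi.single j (eA i k) with hG
  have hCi : G i = eA j k := by simp [hG, Pi.single_apply, hne]
  have hCj : G j = -(eA i k) := by simp [hG, Pi.single_apply, hne.symm]
  have hCo : ∀ ν, ν ≠ i → ν ≠ j → G ν = 0 := by
    intro ν h1 h2; simp [hG, Pi.single_apply, h1, h2]
  funext μ; ext a b
  rw [rho_entry θ hne]
  have key : ∀ ν, Rv (Real.cos θ) (Real.sin θ) i j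
      (fun y => Rv (Real.cos θ) (Real.sin θ) i j (fun x => G ν x y) a) b
      = (if ν = i then -Real.sin θ * eA i k a b + Real.cos θ * eA j k a b
         else if ν = j then -(Real.cos θ * eA i k a b + Real.sin θ * eA j k a b) else 0) := by
    intro ν
    rcases eq_or_ne ν i with rfl | h1
    · simp only [hCi, if_pos rfl]
      exact conj_eA_jk hne hki hkj hcs a b
    rcases eq_or_ne ν j with rfl | h2
    · simp only [hCj, if_neg h1, if_pos rfl]
      have : ∀ (x y : Fin n), (-(eA i k)) x y = -(eA i k x y) := fun x y => rfl
      simp only [this, Rv_neg]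
      rw [conj_eA_ik hne hki hkj hcs a b]
      simp
    · simp only [hCo ν h1 h2, if_neg h1, if_neg h2]
      simp [Rv]
  simp only [key]
  by_cases h1 : μ = i <;> by_cases h2 : μ = j <;>
    simp_all [Rv, Pi.single_apply, hne, Ne.symm hne] <;>
    first
    | ring1
    | linear_combination (eA i k a b) * Real.sin_sq_add_cos_sq θ
    | linear_combination (eA j k a b) * Real.sin_sq_add_cos_sq θ
    | linear_combination (-(eA i k a b)) * Real.sin_sq_add_cos_sq θ
    | linear_combination (-(eA j k a b)) * Real.sin_sq_add_cos_sq θ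


lemma eA_t (l m : Fin n) : (eA l m)ᵀ = -(eA l m) := by
  ext a b
  simp only [Matrix.transpose_apply, Matrix.neg_apply, eA_apply]
  split_ifs <;> first | ring1 | tauto

lemma rho_add (g : Matrix (Fin n) (Fin n) ℝ) (C D : Fin n → Matrix (Fin n) (Fin n) ℝ) :
    rho g (C + D) = rho g C + rho g D := by
  funext μ
  simp [rho, mul_add, add_mul, smul_add, Finset.sum_add_distrib]

lemma rho_smul (g : Matrix (Fin n) (Fin n) ℝ) (r : ℝ) (C : Fin n → Matrix (Fin n) (Fin n) ℝ) :
    rho g (r • C) = r • rho g C := by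
  funext μ
  simp only [rho, Pi.smul_apply, Finset.smul_sum]
  refine Finset.sum_congr rfl fun ν _ => ?_
  rw [mul_smul_comm, smul_mul_assoc, smul_comm]

lemma rho_zero (g : Matrix (Fin n) (Fin n) ℝ) : rho g (0 : Fin n → Matrix (Fin n) (Fin n) ℝ) = 0 := by
  funext μ
  simp [rho]

end Dev

open Dev in
theorem stmt2 (n : ℕ) (hn : 3 ≤ n) (i j : Fin n) (hij : i < j) (θ : ℝ)
    (hθ : Real.sin θ ≠ 0) :
    {C : Fin n → Matrix (Fin n) (Fin n) ℝ |
        (∀ μ, (C μ)ᵀ = -(C μ)) ∧ rho (rot i j θ) C = C} =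
      (Submodule.span ℝ
        {C : Fin n → Matrix (Fin n) (Fin n) ℝ |
          (∃ k l m : Fin n, l < m ∧ k ≠ i ∧ k ≠ j ∧ l ≠ i ∧ l ≠ j ∧ m ≠ i ∧ m ≠ j ∧
            C = Pi.single k (eA l m)) ∨
          (∃ k : Fin n, k ≠ i ∧ k ≠ j ∧
            C = Pi.single i (eA i k) + Pi.single j (eA j k)) ∨
          (∃ k : Fin n, k ≠ i ∧ k ≠ j ∧
            C = Pi.single i (eA j k) - Pi.single j (eA i k)) ∨
          (∃ k : Fin n, k ≠ i ∧ k ≠ j ∧ C = Pi.single k (eA i j))} : Set _) := by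
  have hne : i ≠ j := ne_of_lt hij
  apply Set.Subset.antisymm
  · rintro C ⟨hskew, hfix⟩
    have hcs : Real.sin θ ^ 2 + Real.cos θ ^ 2 = 1 := Real.sin_sq_add_cos_sq θ
    have hsz : ∀ u : ℝ, u ^ 2 = 0 → u = 0 := fun u h => by nlinarith [sq_nonneg u]
    have hc1 : Real.cos θ ≠ 1 := by
      intro h; exact hθ (hsz _ (by nlinarith))
    have hc2 : Real.cos θ ^ 2 - Real.sin θ ^ 2 ≠ 1 := by
      intro h; exact hθ (hsz _ (by nlinarith))
    have hcs2 : (2 * Real.cos θ * Real.sin θ) ^ 2 + (Real.cos θ ^ 2 - Real.sin θ ^ 2) ^ 2 = 1 := by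
      nlinarith [hcs]
    have hE : ∀ μ a b, Rv (Real.cos θ) (Real.sin θ) i j
        (fun ν => Rv (Real.cos θ) (Real.sin θ) i j
          (fun y => Rv (Real.cos θ) (Real.sin θ) i j (fun x => C ν x y) a) b) μ = C μ a b := by
      intro μ a b
      exact (rho_entry θ hne C μ a b).symm.trans (by rw [hfix])
    have hskew' : ∀ μ a b, C μ b a = -C μ a b := by
      intro μ a b
      have := congrFun (congrFun (hskew μ) a) b
      simpa using this
    have hdiag : ∀ μ a, C μ a a = 0 := fun μ a => by
      have := hskew' μ a a; linarith
    have F1 : ∀ a b, a ≠ i → a ≠ j → b ≠ i → b ≠ j → C i a b = 0 ∧ C j a b = 0 := by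
      intro a b ha1 ha2 hb1 hb2
      have e1 := hE i a b
      have e2 := hE j a b
      simp [Rv, ha1, ha2, hb1, hb2, hne, hne.symm] at e1 e2
      exact fix2 hcs hc1 (by linear_combination e1) (by linear_combination e2)
    have F2 : ∀ μ b, μ ≠ i → μ ≠ j → b ≠ i → b ≠ j → C μ i b = 0 ∧ C μ j b = 0 := by
      intro μ b hμ1 hμ2 hb1 hb2
      have e1 := hE μ i b
      have e2 := hE μ j b
      simp [Rv, hμ1, hμ2, hb1, hb2, hne, hne.symm] at e1 e2
      exact fix2 hcs hc1 (by linear_combination e1) (by linear_combination e2)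
    have F4 : ∀ k, k ≠ i → k ≠ j → C i i k = C j j k ∧ C i j k = -C j i k := by
      intro k hk1 hk2
      have e11 := hE i i k
      have e12 := hE i j k
      have e21 := hE j i k
      have e22 := hE j j k
      simp [Rv, hk1, hk2, hne, hne.symm] at e11 e12 e21 e22
      have hu : (Real.cos θ ^ 2 - Real.sin θ ^ 2) * (C i i k - C j j k)
          - (2 * Real.cos θ * Real.sin θ) * (C i j k + C j i k) = C i i k - C j j k := by
        linear_combination e11 - e22
      have hv : (2 * Real.cos θ * Real.sin θ) * (C i i k - C j j k)
          + (Real.cos θ ^ 2 - Real.sin θ ^ 2) * (C i j k + C j i k) = C i j k + C j i k := by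
        linear_combination e12 + e21
      obtain ⟨h1, h2⟩ := fix2 hcs2 hc2 hu hv
      constructor <;> linarith
    have F5 : C i i j = 0 ∧ C j i j = 0 := by
      have e1 := hE i i j
      have e2 := hE j i j
      simp [Rv, hne, hne.symm] at e1 e2
      rw [hdiag i i, hdiag i j, hdiag j i, hdiag j j, hskew' i i j, hskew' j i j] at e1 e2
      refine fix2 hcs hc1 ?_ ?_
      · linear_combination e1 - (Real.cos θ * C i i j - Real.sin θ * C j i j) * hcs
      · linear_combination e2 - (Real.sin θ * C i i j + Real.cos θ * C j i j) * hcs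
    obtain ⟨F5a, F5b⟩ := F5
    have single_eA_entry : ∀ (k l m μ a b : Fin n),
        (Pi.single k (eA l m) : Fin n → Matrix (Fin n) (Fin n) ℝ) μ a b =
          (if μ = k ∧ a = l ∧ b = m then 1 else 0) -
          (if μ = k ∧ a = m ∧ b = l then 1 else 0) := by
      intro k l m μ a b
      rcases eq_or_ne μ k with rfl | h
      · rw [Pi.single_eq_same]
        show (if l = a ∧ m = b then (1:ℝ) else 0) - (if m = a ∧ l = b then 1 else 0) = _
        simp only [eq_self_iff_true, true_and]
        split_ifs <;> first | rfl | ring1 | tauto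
      · simp [Pi.single_eq_of_ne h, h]
    have hrep : C =
        (∑ k, ∑ l, ∑ m, (if k = i ∨ k = j ∨ l = i ∨ l = j ∨ m = i ∨ m = j then 0
            else (1/2) * C k l m) • (Pi.single k (eA l m) : Fin n → Matrix (Fin n) (Fin n) ℝ))
        + (∑ k, (if k = i ∨ k = j then 0 else C i i k) •
            (Pi.single i (eA i k) + Pi.single j (eA j k) : Fin n → Matrix (Fin n) (Fin n) ℝ))
        + (∑ k, (if k = i ∨ k = j then 0 else C i j k) •
            (Pi.single i (eA j k) - Pi.single j (eA i k) : Fin n → Matrix (Fin n) (Fin n) ℝ))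
        + (∑ k, (if k = i ∨ k = j then 0 else C k i j) •
            (Pi.single k (eA i j) : Fin n → Matrix (Fin n) (Fin n) ℝ)) := by
      funext μ
      ext a b
      simp only [Pi.add_apply, Matrix.add_apply, Pi.sub_apply, Matrix.sub_apply,
        Finset.sum_apply, Matrix.sum_apply, Pi.smul_apply, Matrix.smul_apply, smul_eq_mul,
        single_eA_entry, mul_sub, mul_add, mul_ite, mul_one, mul_zero, ite_and,
        Finset.sum_add_distrib, Finset.sum_sub_distrib, Finset.sum_ite_eq, Finset.sum_ite_eq',
        Finset.mem_univ, if_true, Finset.sum_ite_irrel, Finset.sum_const_zero, ite_self,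
        mul_neg, neg_zero]
      clear hskew hfix hsz hc1 hc2 hcs2 hE single_eA_entry hcs
      by_cases hμi : μ = i <;> by_cases hμj : μ = j <;> by_cases hai : a = i <;>
        by_cases haj : a = j <;> by_cases hbi : b = i <;> by_cases hbj : b = j <;>
        (try simp [hdiag, hμi, hμj, hai, haj, hbi, hbj, hne, hne.symm]) <;>
        first
        | rfl
        | exact absurd (hμi.symm.trans hμj) hne
        | exact absurd (hai.symm.trans haj) hne
        | exact absurd (hbi.symm.trans hbj) hne
        | exact (F1 a b hai haj hbi hbj).1
        | exact (F1 a b hai haj hbi hbj).2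
        | exact (F2 μ b hμi hμj hbi hbj).1
        | exact (F2 μ b hμi hμj hbi hbj).2
        | exact F5a
        | exact F5b
        | linarith [hskew' μ a b]
        | linarith [hskew' μ i a, (F2 μ a hμi hμj hai haj).1]
        | linarith [hskew' μ j a, (F2 μ a hμi hμj hai haj).2]
        | linarith [(F4 b hbi hbj).1]
        | linarith [(F4 b hbi hbj).2]
        | linarith [hskew' i i a]
        | linarith [hskew' i j a]
        | linarith [hskew' j i a, (F4 a hai haj).2]
        | linarith [hskew' j j a, (F4 a hai haj).1]
        | linarith [hskew' μ i j]
        | linarith [hskew' i i j, F5a]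
        | linarith [hskew' j i j, F5b]
        | linarith [hskew' μ a b, hskew' μ b a]
    rw [SetLike.mem_coe, hrep]
    refine Submodule.add_mem _ (Submodule.add_mem _ (Submodule.add_mem _ ?_ ?_) ?_) ?_
    · refine Submodule.sum_mem _ fun k _ => Submodule.sum_mem _ fun l _ =>
        Submodule.sum_mem _ fun m _ => ?_
      split_ifs with h
      · rw [zero_smul]; exact Submodule.zero_mem _
      · push_neg at h
        obtain ⟨hk1, hk2, hl1, hl2, hm1, hm2⟩ := h
        rcases lt_trichotomy l m with hlt | rfl | hlt
        · exact Submodule.smul_mem _ _ (Submodule.subset_span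
            (Or.inl ⟨k, l, m, hlt, hk1, hk2, hl1, hl2, hm1, hm2, rfl⟩))
        · have hz : eA l l = 0 := by simp [eA]
          rw [hz]
          simp only [Pi.single_zero, smul_zero]
          exact Submodule.zero_mem _
        · have hz : eA l m = -(eA m l) := by unfold eA; rw [neg_sub]
          rw [hz]
          have : (Pi.single k (-(eA m l)) : Fin n → Matrix (Fin n) (Fin n) ℝ)
              = -(Pi.single k (eA m l)) := by
            funext ν
            rcases eq_or_ne ν k with rfl | hv
            · simp
            · simp [Pi.single_eq_of_ne hv]
          rw [this, smul_neg]
          exact Submodule.neg_mem _ (Submodule.smul_mem _ _ (Submodule.subset_span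
            (Or.inl ⟨k, m, l, hlt, hk1, hk2, hm1, hm2, hl1, hl2, rfl⟩)))
    · refine Submodule.sum_mem _ fun k _ => ?_
      split_ifs with h
      · rw [zero_smul]; exact Submodule.zero_mem _
      · push_neg at h
        exact Submodule.smul_mem _ _ (Submodule.subset_span
          (Or.inr (Or.inl ⟨k, h.1, h.2, rfl⟩)))
    · refine Submodule.sum_mem _ fun k _ => ?_
      split_ifs with h
      · rw [zero_smul]; exact Submodule.zero_mem _
      · push_neg at h
        exact Submodule.smul_mem _ _ (Submodule.subset_span
          (Or.inr (Or.inr (Or.inl ⟨k, h.1, h.2, rfl⟩))))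
    · refine Submodule.sum_mem _ fun k _ => ?_
      split_ifs with h
      · rw [zero_smul]; exact Submodule.zero_mem _
      · push_neg at h
        exact Submodule.smul_mem _ _ (Submodule.subset_span
          (Or.inr (Or.inr (Or.inr ⟨k, h.1, h.2, rfl⟩))))
  · intro C hC
    refine Submodule.span_induction (p := fun C _ =>
      (∀ μ, (C μ)ᵀ = -(C μ)) ∧ rho (rot i j θ) C = C) ?_ ?_ ?_ ?_ hC
    · rintro C (⟨k, l, m, hlm, hki, hkj, hli, hlj, hmi, hmj, rfl⟩ |
        ⟨k, hki, hkj, rfl⟩ | ⟨k, hki, hkj, rfl⟩ | ⟨k, hki, hkj, rfl⟩)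
      · refine ⟨fun μ => ?_, rho_G1 θ hne k l m hki hkj hli hlj hmi hmj⟩
        rcases eq_or_ne μ k with rfl | h
        · simp [Pi.single_eq_same, eA_t]
        · simp [Pi.single_eq_of_ne h]
      · refine ⟨fun μ => ?_, rho_G2 θ hne hki hkj⟩
        simp only [Pi.add_apply, Pi.single_apply, transpose_add]
        split_ifs <;> simp [eA_t] <;> abel
      · refine ⟨fun μ => ?_, rho_G3 θ hne hki hkj⟩
        simp only [Pi.sub_apply, Pi.single_apply, transpose_sub]
        split_ifs <;> simp [eA_t] <;> abel
      · refine ⟨fun μ => ?_, rho_G4 θ hne hki hkj⟩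
        rcases eq_or_ne μ k with rfl | h
        · simp [Pi.single_eq_same, eA_t]
        · simp [Pi.single_eq_of_ne h]
    · exact ⟨fun μ => by simp, rho_zero _⟩
    · rintro C D - - ⟨hC1, hC2⟩ ⟨hD1, hD2⟩
      refine ⟨fun μ => ?_, by rw [rho_add, hC2, hD2]⟩
      simp [Pi.add_apply, transpose_add, hC1 μ, hD1 μ]; abel
    · rintro r C - ⟨hC1, hC2⟩
      refine ⟨fun μ => ?_, by rw [rho_smul, hC2]⟩
      simp [Pi.smul_apply, Matrix.transpose_smul, hC1 μ]
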